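/- Let C be a bivariate copula admitting a tail dependence function Λ. Then for every s, t ≥ 0 and every (u,v) ∈ [0,∞)², min(s,t)·Λ(u,v) ≤ Λ(su, tv) ≤ max(s,t)·Λ(u,v). -/

import Mathlib

open MeasureTheory Filter Set

/-- A bivariate copula: `C : [0,1]² → [0,1]` with the grounded/marginal conditions and
the 2-increasing property. -/
def IsCopula (C : ℝ → ℝ → ℝ) : Prop :=
  (∀ u ∈ Icc (0:ℝ) 1, ∀ v ∈ Icc (0:ℝ) 1, C u v ∈ Icc (0:ℝ) 1) ∧
  (∀ u ∈ Icc (0:ℝ) 1, C u 0 = 0 ∧ C 0 u = 0 ∧ C u 1 = u ∧ C 1 u = u) ∧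
  (∀ u u' v v' : ℝ, u ∈ Icc (0:ℝ) 1 → u' ∈ Icc (0:ℝ) 1 →
    v ∈ Icc (0:ℝ) 1 → v' ∈ Icc (0:ℝ) 1 → u ≤ u' → v ≤ v' →
    0 ≤ C u' v' - C u' v - C u v' + C u v)

/-- `Λ` is the tail dependence function of `C`:
`Λ(u,v) = lim_{p↓0} C(pu,pv)/p` for every `(u,v) ∈ [0,∞)²`. -/
def HasTDF (C Λ : ℝ → ℝ → ℝ) : Prop :=
  ∀ u v : ℝ, 0 ≤ u → 0 ≤ v →
    Tendsto (fun p : ℝ => C (p * u) (p * v) / p)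
      (nhdsWithin (0:ℝ) (Ioi 0)) (nhds (Λ u v))

lemma copula_mono (C : ℝ → ℝ → ℝ) (hC : IsCopula C) {x x' y y' : ℝ}
    (hx : x ∈ Icc (0:ℝ) 1) (hx' : x' ∈ Icc (0:ℝ) 1)
    (hy : y ∈ Icc (0:ℝ) 1) (hy' : y' ∈ Icc (0:ℝ) 1)
    (hxx : x ≤ x') (hyy : y ≤ y') : C x y ≤ C x' y' := by
  obtain ⟨_, hg, h2⟩ := hC
  have h01 : (0:ℝ) ∈ Icc (0:ℝ) 1 := ⟨le_refl 0, zero_le_one⟩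
  have step1 : C x y ≤ C x' y := by
    have := h2 x x' 0 y hx hx' h01 hy hxx hy.1
    have e1 := (hg x' hx').1
    have e2 := (hg x hx).1
    linarith
  have step2 : C x' y ≤ C x' y' := by
    have := h2 0 x' y y' h01 hx' hy hy' hx'.1 hyy
    have e1 := (hg y hy).2.1
    have e2 := (hg y' hy').2.1
    linarith
  linarith

lemma tdf_mono (C Λ : ℝ → ℝ → ℝ) (hC : IsCopula C) (hΛ : HasTDF C Λ)
    {u v u' v' : ℝ} (hu : 0 ≤ u) (hv : 0 ≤ v) (huu : u ≤ u') (hvv : v ≤ v') :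
    Λ u v ≤ Λ u' v' := by
  have hu' : 0 ≤ u' := hu.trans huu
  have hv' : 0 ≤ v' := hv.trans hvv
  refine le_of_tendsto_of_tendsto (hΛ u v hu hv) (hΛ u' v' hu' hv') ?_
  have hε : (0:ℝ) < 1 / (1 + u' + v') := by positivity
  filter_upwards [Ioo_mem_nhdsGT_of_mem ⟨le_refl (0:ℝ), hε⟩] with p hp
  obtain ⟨hp0, hpε⟩ := hp
  have key : ∀ w : ℝ, 0 ≤ w → w ≤ u' + v' → p * w ∈ Icc (0:ℝ) 1 := by
    intro w hw hwle
    constructor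
    · positivity
    · have h1 : p * w ≤ p * (u' + v') := by nlinarith
      have h2 : p * (1 + u' + v') < 1 := by
        have := mul_lt_mul_of_pos_right hpε (show (0:ℝ) < 1 + u' + v' by positivity)
        rwa [div_mul_cancel₀] at this
        positivity
      nlinarith
  have hmem1 := key u hu (by linarith)
  have hmem2 := key v hv (by linarith)
  have hmem3 := key u' hu' (by linarith)
  have hmem4 := key v' hv' (by linarith)
  have := copula_mono C hC hmem1 hmem3 hmem2 hmem4
    (by nlinarith) (by nlinarith)
  exact div_le_div_of_nonneg_right this hp0.le

lemma tdf_homog (C Λ : ℝ → ℝ → ℝ) (hC : IsCopula C) (hΛ : HasTDF C Λ)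
    {a u v : ℝ} (ha : 0 ≤ a) (hu : 0 ≤ u) (hv : 0 ≤ v) :
    Λ (a * u) (a * v) = a * Λ u v := by
  rcases eq_or_lt_of_le ha with rfl | hapos
  · simp only [zero_mul]
    have h1 := hΛ 0 0 le_rfl le_rfl
    have hC00 : C 0 0 = 0 := ((hC.2.1 0 ⟨le_refl 0, zero_le_one⟩).1)
    have h2 : Tendsto (fun p : ℝ => C (p * 0) (p * 0) / p)
        (nhdsWithin (0:ℝ) (Ioi 0)) (nhds 0) := by
      simp only [mul_zero, hC00, zero_div]
      exact tendsto_const_nhds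
    exact tendsto_nhds_unique h1 h2
  · have hmap : Tendsto (fun p : ℝ => p * a) (nhdsWithin (0:ℝ) (Ioi 0))
        (nhdsWithin (0:ℝ) (Ioi 0)) := by
      apply tendsto_nhdsWithin_of_tendsto_nhds_of_eventually_within
      · have : Tendsto (fun p : ℝ => p * a) (nhds 0) (nhds (0 * a)) :=
          (continuous_id.mul continuous_const).tendsto 0
        simpa using this.mono_left nhdsWithin_le_nhds
      · filter_upwards [self_mem_nhdsWithin] with p hp
        exact mul_pos hp hapos
    have h1 : Tendsto (fun p : ℝ => C ((p * a) * u) ((p * a) * v) / (p * a))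
        (nhdsWithin (0:ℝ) (Ioi 0)) (nhds (Λ u v)) := (hΛ u v hu hv).comp hmap
    have h2 : Tendsto (fun p : ℝ => a * (C ((p * a) * u) ((p * a) * v) / (p * a)))
        (nhdsWithin (0:ℝ) (Ioi 0)) (nhds (a * Λ u v)) := h1.const_mul a
    have h3 : Tendsto (fun p : ℝ => C (p * (a * u)) (p * (a * v)) / p)
        (nhdsWithin (0:ℝ) (Ioi 0)) (nhds (a * Λ u v)) := by
      refine h2.congr' ?_
      filter_upwards [self_mem_nhdsWithin] with p hp
      have hp0 : p ≠ 0 := ne_of_gt hp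
      have ha0 : a ≠ 0 := ne_of_gt hapos
      rw [mul_assoc, mul_assoc] at *
      field_simp
    exact tendsto_nhds_unique (hΛ (a * u) (a * v) (by positivity) (by positivity)) h3

theorem tdf_max_min_inequalities (C Λ : ℝ → ℝ → ℝ)
    (hC : IsCopula C) (hΛ : HasTDF C Λ) :
    ∀ s t u v : ℝ, 0 ≤ s → 0 ≤ t → 0 ≤ u → 0 ≤ v →
      min s t * Λ u v ≤ Λ (s * u) (t * v) ∧ Λ (s * u) (t * v) ≤ max s t * Λ u v := by
  intro s t u v hs ht hu hv
  have hm : 0 ≤ min s t := le_min hs ht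
  have hM : 0 ≤ max s t := hs.trans (le_max_left s t)
  constructor
  · rw [← tdf_homog C Λ hC hΛ hm hu hv]
    exact tdf_mono C Λ hC hΛ (by positivity) (by positivity)
      (mul_le_mul_of_nonneg_right (min_le_left s t) hu)
      (mul_le_mul_of_nonneg_right (min_le_right s t) hv)
  · rw [← tdf_homog C Λ hC hΛ hM hu hv]
    exact tdf_mono C Λ hC hΛ (by positivity) (by positivity)
      (mul_le_mul_of_nonneg_right (le_max_left s t) hu)
      (mul_le_mul_of_nonneg_right (le_max_right s t) hv)
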